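/- Let M be a connected Riemannian manifold and let π : M̄ → M be a covering map, with M̄ given the pulled-back Riemannian metric. If γ : [0,c) → M is a 1-Lipschitz curve with no continuous extension to [0,c], then any lift γ̄ : [0,c) → M̄ of γ is 1-Lipschitz (for the induced distance on M̄) and has no continuous extension to [0,c]. -/

import Mathlib

open Set

/-- Lifts of non-extendable 1-Lipschitz curves along a covering map which is a local
isometry (and the covering space carries the induced path metric) are 1-Lipschitz and
non-extendable. -/
theorem stmt8 {M' M : Type*} [MetricSpace M'] [MetricSpace M] {π : M' → M}
    (hcov : IsCoveringMap π)
    (hloc : ∀ x : M', ∃ ε > 0, ∀ a ∈ Metric.ball x ε, ∀ b ∈ Metric.ball x ε,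
      dist a b = dist (π a) (π b))
    {c : ℝ} (hc : 0 < c) {γ : ℝ → M}
    (hγ : LipschitzOnWith 1 γ (Ico 0 c))
    (hnoext : ¬ ∃ γ' : ℝ → M, ContinuousOn γ' (Icc 0 c) ∧ EqOn γ' γ (Ico 0 c))
    {γbar : ℝ → M'} (hcont : ContinuousOn γbar (Ico 0 c))
    (hlift : ∀ t ∈ Ico 0 c, π (γbar t) = γ t) :
    LipschitzOnWith 1 γbar (Ico 0 c) ∧
      ¬ ∃ γ' : ℝ → M', ContinuousOn γ' (Icc 0 c) ∧ EqOn γ' γbar (Ico 0 c) := by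
  have key : ∀ s ∈ Ico 0 c, ∀ t ∈ Ico 0 c, s ≤ t → dist (γbar s) (γbar t) ≤ t - s := by
    intro s hs t ht hst
    have hIcc : Icc s t ⊆ Ico 0 c := fun u hu => ⟨hs.1.trans hu.1, lt_of_le_of_lt hu.2 ht.2⟩
    set S : Set ℝ := {u | dist (γbar s) (γbar u) ≤ u - s} with hS
    have hclosed : IsClosed (S ∩ Icc s t) := by
      rw [inter_comm]
      have hco : ContinuousOn (fun u => (dist (γbar s) (γbar u), u - s)) (Icc s t) :=
        ((continuous_dist.comp_continuousOn (continuousOn_const.prodMk (hcont.mono hIcc))).prodMk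
          ((continuous_id.sub continuous_const).continuousOn))
      exact hco.preimage_isClosed_of_isClosed isClosed_Icc OrderClosedTopology.isClosed_le'
    have hsub : Icc s t ⊆ S := by
      apply hclosed.Icc_subset_of_forall_exists_gt
      · simp [hS, sub_nonneg.mpr hst, dist_self]
      · rintro x ⟨hxS, hx⟩ y hy
        have hxIco : x ∈ Ico 0 c := hIcc ⟨hx.1, hx.2.le⟩
        obtain ⟨ε, hε, hiso⟩ := hloc (γbar x)
        have hct : ContinuousWithinAt γbar (Ico 0 c) x := hcont x hxIco
        have : Metric.ball (γbar x) ε ∈ nhds (γbar x) := Metric.ball_mem_nhds _ hε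
        obtain ⟨δ, hδ, hδ'⟩ := Metric.mem_nhdsWithin_iff.mp (hct this)
        -- pick z ∈ (x, min y t] with z - x < δ
        set z : ℝ := min (min y (x + δ / 2)) t with hz
        have hzx : x < z := by
          apply lt_min (lt_min hy (by linarith)) hx.2
        have hzy : z ≤ y := (min_le_left _ _).trans (min_le_left _ _)
        have hzt : z ≤ t := min_le_right _ _
        have hzδ : z - x < δ := by
          have : z ≤ x + δ / 2 := (min_le_left _ _).trans (min_le_right _ _)
          linarith
        have hzIco : z ∈ Ico 0 c := hIcc ⟨hx.1.trans hzx.le, hzt⟩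
        have hzball : γbar z ∈ Metric.ball (γbar x) ε := by
          apply hδ' ⟨?_, hzIco⟩
          simp only [Metric.mem_ball, Real.dist_eq, abs_lt]
          constructor <;> linarith
        have hxball : γbar x ∈ Metric.ball (γbar x) ε := Metric.mem_ball_self hε
        have hdxz : dist (γbar x) (γbar z) ≤ z - x := by
          rw [hiso _ hxball _ hzball, hlift x hxIco, hlift z hzIco]
          have := hγ.dist_le_mul x hxIco z hzIco
          rw [NNReal.coe_one, one_mul, Real.dist_eq, abs_of_nonpos (by linarith)] at this
          linarith
        refine ⟨z, ?_, hzx, hzy⟩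
        calc dist (γbar s) (γbar z) ≤ dist (γbar s) (γbar x) + dist (γbar x) (γbar z) :=
              dist_triangle _ _ _
          _ ≤ (x - s) + (z - x) := add_le_add hxS hdxz
          _ = z - s := by ring
    have := hsub ⟨hst, le_refl t⟩
    simpa [hS] using this
  constructor
  · rw [lipschitzOnWith_iff_dist_le_mul]
    intro x hx y hy
    rw [NNReal.coe_one, one_mul]
    rcases le_total x y with h | h
    · rw [dist_comm, Real.dist_eq, abs_of_nonpos (by linarith)]
      have := key x hx y hy h
      rw [dist_comm] at this
      linarith
    · rw [Real.dist_eq, abs_of_nonneg (by linarith)]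
      have := key y hy x hx h
      rw [dist_comm] at this
      linarith
  · rintro ⟨γ', hγ'c, hγ'e⟩
    apply hnoext
    refine ⟨π ∘ γ', hcov.continuous.comp_continuousOn hγ'c, fun u hu => ?_⟩
    have : γ' u = γbar u := hγ'e hu
    simp only [Function.comp_apply, this, hlift u hu]
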